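/- Assume in addition that |C(t,μ) − C(t,ν)| ≤ L·d_Pr(μ,ν) for all t ≤ T and all finite nonnegative Borel measures μ,ν on [0,∞). Then for all u, u' ∈ M and all t ∈ [0,T]: ‖K_t[u] − K_t[u']‖₁ ≤ T·‖τ‖_∞·(2rL + 1)·sup_{s≤T} ‖u_s − u'_s‖₁. In particular, if T·‖τ‖_∞·(2rL + 1) < 1, the map K is a strict contraction on M for the distance d(u,u') = sup_{s≤T} ‖u_s − u'_s‖₁. -/

import Mathlib

open MeasureTheory Set Filter

/-- The finite measure on `[0,∞)` with Lebesgue density `f`. -/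
noncomputable def densMeasure (f : ℝ → ℝ) : Measure ℝ :=
  (volume.restrict (Ici 0)).withDensity fun a => ENNReal.ofReal (f a)

/-- The `L¹([0,∞))`-norm of a function. -/
noncomputable def L1norm (f : ℝ → ℝ) : ℝ := ∫ a in Ici (0 : ℝ), |f a|

/-- `C` is Lipschitz in its measure argument, with constant `L`, uniformly over times in
`[0, T]`, with respect to the Lévy–Prokhorov distance on the finite nonnegative Borel
measures supported on `[0, ∞)`. -/
def ProkhorovLipschitz (C : ℝ → Measure ℝ → ℝ) (L T : ℝ) : Prop :=
  ∀ t ∈ Icc (0 : ℝ) T, ∀ μ ν : Measure ℝ, IsFiniteMeasure μ → IsFiniteMeasure ν →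
    μ (Iio 0) = 0 → ν (Iio 0) = 0 →
    |C t μ - C t ν| ≤ L * levyProkhorovDist μ ν

/-- `C` is (jointly) continuous on `[0,∞) × M([0,∞))`, where the space of finite
nonnegative measures on `[0,∞)` carries the weak topology, metrized by the
Lévy–Prokhorov distance. -/
def ProkhorovContinuous (C : ℝ → Measure ℝ → ℝ) : Prop :=
  ∀ t ∈ Ici (0 : ℝ), ∀ μ : Measure ℝ, IsFiniteMeasure μ → μ (Iio 0) = 0 →
    ∀ ε > (0 : ℝ), ∃ δ > (0 : ℝ), ∀ s ∈ Ici (0 : ℝ), ∀ ν : Measure ℝ,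
      IsFiniteMeasure ν → ν (Iio 0) = 0 →
      |s - t| < δ → levyProkhorovDist μ ν < δ → |C s ν - C t μ| < ε

/-- `u = (u_t)_{t ∈ I}` is a solution of the nonlinear renewal equation with initial
condition `g`, for times in the set `I`: each `u_t` is nonnegative and in `L¹([0,∞))`,
`u_t(a) = C(t-a, u_{t-a}) ∫₀^∞ u_{t-a}(s) τ(s) ds` for a.e. `a ∈ [0,t)`, and
`u_t(a) = g(a-t)` for a.e. `a ≥ t`. -/
def IsRenewalSolutionOn (τ : ℝ → ℝ) (C : ℝ → Measure ℝ → ℝ) (g : ℝ → ℝ)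
    (u : ℝ → ℝ → ℝ) (I : Set ℝ) : Prop :=
  ∀ t ∈ I,
    Integrable (u t) (volume.restrict (Ici 0)) ∧
    (∀ᵐ a ∂(volume.restrict (Ici (0 : ℝ))), 0 ≤ u t a) ∧
    (∀ᵐ a ∂(volume.restrict (Ico (0 : ℝ) t)),
      u t a = C (t - a) (densMeasure (u (t - a))) * ∫ z in Ici (0 : ℝ), u (t - a) z * τ z) ∧
    (∀ᵐ a ∂(volume.restrict (Ici t)), u t a = g (a - t))

/-- The set `M` of candidate solutions on `[0,T]`: continuous maps from `[0,T]` to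
`L¹([0,∞))`, with `u_t` nonnegative a.e., `sup_{t ≤ T} ‖u_t‖₁ ≤ 2r`, and `u_0 = g`. -/
def MemM (g : ℝ → ℝ) (u : ℝ → ℝ → ℝ) (T r : ℝ) : Prop :=
  (∀ t ∈ Icc (0 : ℝ) T,
      Integrable (u t) (volume.restrict (Ici 0)) ∧
      (∀ᵐ a ∂(volume.restrict (Ici (0 : ℝ))), 0 ≤ u t a) ∧
      L1norm (u t) ≤ 2 * r) ∧
  (∀ t ∈ Icc (0 : ℝ) T, ∀ ε > (0 : ℝ), ∃ δ > (0 : ℝ), ∀ s ∈ Icc (0 : ℝ) T,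
      |s - t| < δ → L1norm (fun a => u s a - u t a) < ε) ∧
  u 0 =ᵐ[volume.restrict (Ici (0 : ℝ))] g

/-- The fixed-point map `K`: `K_t[u](a) = C(t-a, u_{t-a})·∫₀^∞ u_{t-a}(s) τ(s) ds` for
`a ∈ [0,t)`, and `K_t[u](a) = g(a-t)` for `a ≥ t`. -/
noncomputable def Kmap (τ : ℝ → ℝ) (C : ℝ → Measure ℝ → ℝ) (g : ℝ → ℝ)
    (u : ℝ → ℝ → ℝ) (t : ℝ) : ℝ → ℝ :=
  fun a =>
    if a < t then C (t - a) (densMeasure (u (t - a))) * ∫ z in Ici (0 : ℝ), u (t - a) z * τ z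
    else g (a - t)

lemma l1norm_nonneg (f : ℝ → ℝ) : 0 ≤ L1norm f :=
  integral_nonneg fun a => abs_nonneg _

lemma l1norm_sub_comm (f h : ℝ → ℝ) :
    L1norm (fun a => f a - h a) = L1norm (fun a => h a - f a) := by
  unfold L1norm
  congr 1 with a
  exact abs_sub_comm _ _

lemma densMeasure_isFinite {f : ℝ → ℝ} (hf : Integrable f (volume.restrict (Ici 0))) :
    IsFiniteMeasure (densMeasure f) := by
  constructor
  rw [densMeasure, withDensity_apply _ MeasurableSet.univ, Measure.restrict_univ]
  exact hf.lintegral_lt_top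

lemma densMeasure_Iio (f : ℝ → ℝ) : densMeasure f (Iio 0) = 0 := by
  rw [densMeasure, withDensity_apply _ measurableSet_Iio,
    Measure.restrict_restrict measurableSet_Iio]
  have : Iio (0:ℝ) ∩ Ici 0 = ∅ := by
    ext x
    simp only [mem_inter_iff, mem_Iio, mem_Ici, mem_empty_iff_false, iff_false, not_and, not_le]
    exact fun h => h
  simp [this]

lemma densMeasure_le {f h : ℝ → ℝ} (hf : Integrable f (volume.restrict (Ici 0)))
    (hh : Integrable h (volume.restrict (Ici 0))) {E : Set ℝ} (hE : MeasurableSet E) :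
    densMeasure f E ≤ densMeasure h E + ENNReal.ofReal (L1norm fun a => f a - h a) := by
  rw [densMeasure, densMeasure, withDensity_apply _ hE, withDensity_apply _ hE]
  have hsub : Integrable (fun a => |f a - h a|) (volume.restrict (Ici 0)) := (hf.sub hh).abs
  calc ∫⁻ a in E, ENNReal.ofReal (f a) ∂(volume.restrict (Ici 0))
      ≤ ∫⁻ a in E, (ENNReal.ofReal (h a) + ENNReal.ofReal (|f a - h a|))
          ∂(volume.restrict (Ici 0)) := by
        refine lintegral_mono fun a => ?_
        calc ENNReal.ofReal (f a) ≤ ENNReal.ofReal (h a + |f a - h a|) := by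
              apply ENNReal.ofReal_le_ofReal; nlinarith [le_abs_self (f a - h a)]
          _ ≤ _ := ENNReal.ofReal_add_le
    _ = (∫⁻ a in E, ENNReal.ofReal (h a) ∂(volume.restrict (Ici 0)))
        + ∫⁻ a in E, ENNReal.ofReal (|f a - h a|) ∂(volume.restrict (Ici 0)) :=
        lintegral_add_left' (hh.aemeasurable.ennreal_ofReal.restrict) _
    _ ≤ (∫⁻ a in E, ENNReal.ofReal (h a) ∂(volume.restrict (Ici 0)))
        + ∫⁻ a, ENNReal.ofReal (|f a - h a|) ∂(volume.restrict (Ici 0)) :=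
        add_le_add_right (setLIntegral_le_lintegral _ _) _
    _ = _ := by
        congr 1
        rw [← ofReal_integral_eq_lintegral_ofReal hsub
          (Eventually.of_forall fun a => abs_nonneg _)]
        rfl

lemma levyProkhorovDist_densMeasure_le {f h : ℝ → ℝ}
    (hf : Integrable f (volume.restrict (Ici 0)))
    (hh : Integrable h (volume.restrict (Ici 0))) :
    levyProkhorovDist (densMeasure f) (densMeasure h) ≤ L1norm (fun a => f a - h a) := by
  have key : levyProkhorovEDist (densMeasure f) (densMeasure h)
      ≤ ENNReal.ofReal (L1norm fun a => f a - h a) := by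
    apply levyProkhorovEDist_le_of_forall
    intro ε E hε hεtop hE
    have hε0 : 0 < ε.toReal :=
      ENNReal.toReal_pos (ne_of_gt (lt_of_le_of_lt zero_le hε)) hεtop.ne
    have hsub : E ⊆ Metric.thickening ε.toReal E := Metric.self_subset_thickening hε0 E
    constructor
    · calc densMeasure f E ≤ densMeasure h E + ENNReal.ofReal (L1norm fun a => f a - h a) :=
            densMeasure_le hf hh hE
        _ ≤ densMeasure h (Metric.thickening ε.toReal E) + ε :=
            add_le_add (measure_mono hsub) hε.le
    · calc densMeasure h E ≤ densMeasure f E + ENNReal.ofReal (L1norm fun a => h a - f a) :=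
            densMeasure_le hh hf hE
        _ ≤ densMeasure f (Metric.thickening ε.toReal E) + ε := by
            rw [l1norm_sub_comm h f]
            exact add_le_add (measure_mono hsub) hε.le
  exact ENNReal.toReal_le_of_le_ofReal (l1norm_nonneg _) key

lemma integrable_mul_tau {τ : ℝ → ℝ} (hτmeas : Measurable τ) (hτnn : ∀ a, 0 ≤ τ a)
    {B : ℝ} (hτB : ∀ᵐ a ∂(volume.restrict (Ici (0:ℝ))), τ a ≤ B)
    {f : ℝ → ℝ} (hf : Integrable f (volume.restrict (Ici 0))) :
    Integrable (fun z => f z * τ z) (volume.restrict (Ici 0)) := by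
  refine Integrable.mono' (hf.abs.const_mul B)
    (hf.aestronglyMeasurable.mul hτmeas.aestronglyMeasurable) ?_
  filter_upwards [hτB] with z hz
  rw [Real.norm_eq_abs, abs_mul, abs_of_nonneg (hτnn z)]
  nlinarith [abs_nonneg (f z), hτnn z]

lemma integral_mul_tau_diff {τ : ℝ → ℝ} (hτmeas : Measurable τ) (hτnn : ∀ a, 0 ≤ τ a)
    {B : ℝ} (hτB : ∀ᵐ a ∂(volume.restrict (Ici (0:ℝ))), τ a ≤ B)
    {f h : ℝ → ℝ} (hf : Integrable f (volume.restrict (Ici 0)))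
    (hh : Integrable h (volume.restrict (Ici 0))) :
    |(∫ z in Ici (0:ℝ), f z * τ z) - ∫ z in Ici (0:ℝ), h z * τ z|
      ≤ B * L1norm (fun z => f z - h z) := by
  rw [← integral_sub (integrable_mul_tau hτmeas hτnn hτB hf)
    (integrable_mul_tau hτmeas hτnn hτB hh)]
  have heq : ∀ z, f z * τ z - h z * τ z = (f z - h z) * τ z := fun z => by ring
  simp_rw [heq]
  calc |∫ z in Ici (0:ℝ), (f z - h z) * τ z|
      ≤ ∫ z in Ici (0:ℝ), |f z - h z| * |τ z| := by
        simpa [Real.norm_eq_abs, abs_mul] using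
          norm_integral_le_integral_norm (μ := volume.restrict (Ici 0))
            (fun z => (f z - h z) * τ z)
    _ ≤ ∫ z in Ici (0:ℝ), B * |f z - h z| := by
        refine integral_mono_of_nonneg (Eventually.of_forall fun z =>
          mul_nonneg (abs_nonneg _) (abs_nonneg _)) ((hf.sub hh).abs.const_mul B) ?_
        filter_upwards [hτB] with z hz
        rw [abs_of_nonneg (hτnn z)]
        nlinarith [abs_nonneg (f z - h z), hτnn z]
    _ = B * L1norm (fun z => f z - h z) := by
        rw [integral_const_mul]; rfl

lemma integral_mul_tau_nonneg {τ : ℝ → ℝ} (hτnn : ∀ a, 0 ≤ τ a)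
    {f : ℝ → ℝ} (hfnn : ∀ᵐ a ∂(volume.restrict (Ici (0:ℝ))), 0 ≤ f a) :
    0 ≤ ∫ z in Ici (0:ℝ), f z * τ z := by
  refine integral_nonneg_of_ae ?_
  filter_upwards [hfnn] with z hz
  exact mul_nonneg hz (hτnn z)

lemma integral_mul_tau_le {τ : ℝ → ℝ} (hτmeas : Measurable τ) (hτnn : ∀ a, 0 ≤ τ a)
    {B : ℝ} (hτB : ∀ᵐ a ∂(volume.restrict (Ici (0:ℝ))), τ a ≤ B)
    {f : ℝ → ℝ} (hf : Integrable f (volume.restrict (Ici 0))) :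
    (∫ z in Ici (0:ℝ), f z * τ z) ≤ B * L1norm f := by
  calc (∫ z in Ici (0:ℝ), f z * τ z)
      ≤ ∫ z in Ici (0:ℝ), B * |f z| := by
        refine integral_mono_ae (integrable_mul_tau hτmeas hτnn hτB hf)
          (hf.abs.const_mul B) ?_
        filter_upwards [hτB] with z hz
        nlinarith [le_abs_self (f z), abs_nonneg (f z), hτnn z]
    _ = B * L1norm f := by rw [integral_const_mul]; rfl

/-- If moreover `C` is `L`-Lipschitz in its measure argument (w.r.t.
the Prokhorov distance) uniformly for `t ≤ T`, then for all `u, u' ∈ M` and `t ∈ [0,T]`,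
`‖K_t[u] − K_t[u']‖₁ ≤ T·‖τ‖_∞·(2rL + 1)·sup_{s ≤ T} ‖u_s − u'_s‖₁`; in particular, if
`T·‖τ‖_∞·(2rL+1) < 1`, `K` is a strict contraction on `M` for the distance
`d(u,u') = sup_{s ≤ T} ‖u_s − u'_s‖₁`. -/
theorem Kmap_contraction
    (τ : ℝ → ℝ) (hτmeas : Measurable τ) (hτnonneg : ∀ a, 0 ≤ τ a)
    (B : ℝ) (hτB : ∀ᵐ a ∂(volume.restrict (Ici (0 : ℝ))), τ a ≤ B)
    (C : ℝ → Measure ℝ → ℝ)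
    (hC01 : ∀ t μ, C t μ ∈ Icc (0 : ℝ) 1)
    (hCcont : ProkhorovContinuous C)
    (T r L : ℝ) (hT : 0 < T) (hr : 0 < r) (hL : 0 < L)
    (hCLip : ProkhorovLipschitz C L T)
    (g : ℝ → ℝ) (hg : Integrable g (volume.restrict (Ici 0)))
    (hgnonneg : ∀ᵐ a ∂(volume.restrict (Ici (0 : ℝ))), 0 ≤ g a)
    (u u' : ℝ → ℝ → ℝ) (hu : MemM g u T r) (hu' : MemM g u' T r) :
    ∀ t ∈ Icc (0 : ℝ) T,
      L1norm (fun a => Kmap τ C g u t a - Kmap τ C g u' t a) ≤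
        T * B * (2 * r * L + 1) *
          sSup ((fun s => L1norm (fun a => u s a - u' s a)) '' Icc (0 : ℝ) T) := by
  intro t ht
  obtain ⟨ht0, htT⟩ := ht
  obtain ⟨huA, -, -⟩ := hu
  obtain ⟨huA', -, -⟩ := hu'
  set S := sSup ((fun s => L1norm (fun a => u s a - u' s a)) '' Icc (0 : ℝ) T) with hSdef
  -- B is nonnegative
  haveI hneB : (ae (volume.restrict (Ici (0:ℝ)))).NeBot := by
    refine ae_neBot.mpr ?_
    simp [Measure.restrict_eq_zero, Real.volume_Ici]
  have hB0 : 0 ≤ B := by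
    obtain ⟨a₀, ha₀⟩ := hτB.exists
    exact le_trans (hτnonneg a₀) ha₀
  -- the sup is well behaved
  have hbdd : BddAbove ((fun s => L1norm (fun a => u s a - u' s a)) '' Icc (0 : ℝ) T) := by
    refine ⟨4 * r, ?_⟩
    rintro x ⟨s, hs, rfl⟩
    obtain ⟨hi, -, hb⟩ := huA s hs
    obtain ⟨hi', -, hb'⟩ := huA' s hs
    have hx : L1norm (fun a => u s a - u' s a) ≤ L1norm (u s) + L1norm (u' s) := by
      unfold L1norm
      rw [← integral_add hi.abs hi'.abs]
      exact integral_mono_of_nonneg (Eventually.of_forall fun a => abs_nonneg _)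
        (hi.abs.add hi'.abs) (Eventually.of_forall fun a => abs_sub _ _)
    linarith
  have hle : ∀ s ∈ Icc (0:ℝ) T, L1norm (fun a => u s a - u' s a) ≤ S :=
    fun s hs => le_csSup hbdd ⟨s, hs, rfl⟩
  have hS0 : 0 ≤ S :=
    le_trans (l1norm_nonneg _) (hle 0 ⟨le_refl 0, hT.le⟩)
  have hc0 : 0 ≤ B * (2 * r * L + 1) * S := by
    have : (0:ℝ) ≤ 2 * r * L + 1 := by positivity
    exact mul_nonneg (mul_nonneg hB0 this) hS0
  -- pointwise bound
  have key : ∀ a ∈ Ici (0:ℝ),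
      |Kmap τ C g u t a - Kmap τ C g u' t a|
        ≤ (Ico (0:ℝ) t).indicator (fun _ => B * (2 * r * L + 1) * S) a := by
    intro a ha
    by_cases hat : a < t
    · rw [indicator_of_mem (show a ∈ Ico (0:ℝ) t from ⟨ha, hat⟩)]
      have hsIcc : t - a ∈ Icc (0:ℝ) T := by
        constructor
        · linarith [hat.le]
        · have : (0:ℝ) ≤ a := ha
          linarith
      obtain ⟨hi, hnn, hb⟩ := huA (t - a) hsIcc
      obtain ⟨hi', hnn', hb'⟩ := huA' (t - a) hsIcc
      have hΦS : L1norm (fun z => u (t - a) z - u' (t - a) z) ≤ S := hle (t - a) hsIcc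
      simp only [Kmap, if_pos hat]
      set Cu := C (t - a) (densMeasure (u (t - a))) with hCu
      set Cv := C (t - a) (densMeasure (u' (t - a))) with hCv
      set Iu := ∫ z in Ici (0:ℝ), u (t - a) z * τ z with hIu
      set Iv := ∫ z in Ici (0:ℝ), u' (t - a) z * τ z with hIv
      have hC1 : |Cu| ≤ 1 := by
        obtain ⟨h0, h1⟩ := hC01 (t - a) (densMeasure (u (t - a)))
        rw [hCu, abs_of_nonneg h0]; exact h1
      have hIdiff : |Iu - Iv| ≤ B * S := by
        calc |Iu - Iv| ≤ B * L1norm (fun z => u (t - a) z - u' (t - a) z) :=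
              integral_mul_tau_diff hτmeas hτnonneg hτB hi hi'
          _ ≤ B * S := mul_le_mul_of_nonneg_left hΦS hB0
      have hLip : |Cu - Cv| ≤ L * S := by
        calc |Cu - Cv| ≤ L * levyProkhorovDist (densMeasure (u (t - a)))
              (densMeasure (u' (t - a))) :=
              hCLip (t - a) hsIcc _ _ (densMeasure_isFinite hi) (densMeasure_isFinite hi')
                (densMeasure_Iio _) (densMeasure_Iio _)
          _ ≤ L * L1norm (fun z => u (t - a) z - u' (t - a) z) :=
              mul_le_mul_of_nonneg_left (levyProkhorovDist_densMeasure_le hi hi') hL.le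
          _ ≤ L * S := mul_le_mul_of_nonneg_left hΦS hL.le
      have hIv0 : 0 ≤ Iv := integral_mul_tau_nonneg hτnonneg hnn'
      have hIvle : Iv ≤ 2 * r * B := by
        calc Iv ≤ B * L1norm (u' (t - a)) := integral_mul_tau_le hτmeas hτnonneg hτB hi'
          _ ≤ 2 * r * B := by nlinarith [l1norm_nonneg (u' (t - a))]
      have expand : Cu * Iu - Cv * Iv = Cu * (Iu - Iv) + (Cu - Cv) * Iv := by ring
      rw [expand]
      calc |Cu * (Iu - Iv) + (Cu - Cv) * Iv|
          ≤ |Cu| * |Iu - Iv| + |Cu - Cv| * |Iv| := by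
            refine (abs_add_le _ _).trans ?_
            rw [abs_mul, abs_mul]
        _ ≤ B * (2 * r * L + 1) * S := by
            have h1 : |Cu| * |Iu - Iv| ≤ 1 * (B * S) :=
              mul_le_mul hC1 hIdiff (abs_nonneg _) zero_le_one
            have h2 : |Cu - Cv| * |Iv| ≤ (L * S) * (2 * r * B) := by
              rw [abs_of_nonneg hIv0]
              exact mul_le_mul hLip hIvle hIv0 (mul_nonneg hL.le hS0)
            have h3 : 1 * (B * S) + (L * S) * (2 * r * B) = B * (2 * r * L + 1) * S := by
              ring
            linarith
    · rw [indicator_of_notMem (fun hmem => hat hmem.2)]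
      simp [Kmap, if_neg hat]
  -- integrate the pointwise bound
  calc L1norm (fun a => Kmap τ C g u t a - Kmap τ C g u' t a)
      ≤ ∫ a in Ici (0:ℝ), (Ico (0:ℝ) t).indicator (fun _ => B * (2 * r * L + 1) * S) a := by
        unfold L1norm
        refine integral_mono_of_nonneg (Eventually.of_forall fun a => abs_nonneg _) ?_ ?_
        · refine (integrable_indicator_iff measurableSet_Ico).mpr ?_
          refine (integrableOn_const_iff (by finiteness)).mpr (Or.inr ?_)
          exact lt_of_le_of_lt (Measure.restrict_apply_le _ _) measure_Ico_lt_top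
        · filter_upwards [ae_restrict_mem measurableSet_Ici] with a ha using key a ha
    _ = t * (B * (2 * r * L + 1) * S) := by
        rw [integral_indicator measurableSet_Ico, setIntegral_const,
          measureReal_restrict_apply measurableSet_Ico,
          inter_eq_left.mpr Ico_subset_Ici_self, Real.volume_real_Ico, smul_eq_mul,
          max_eq_left (by linarith)]
        ring
    _ ≤ T * B * (2 * r * L + 1) * S := by
        nlinarith [mul_le_mul_of_nonneg_right htT hc0]
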